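/- Let T be a stochastic transition matrix on E_κ satisfying T(a,b,0) > 0 and T(0,0,c) > 0 for all a,b,c, together with the condition T(a,b,c) = T(0,0,0)·T(a,b,0)·T(a,0,c)·T(0,b,c)/(T(a,0,0)·T(0,b,0)·T(0,0,c)) whenever defined. Then for any a,b,c: if T(a,b,c) = 0, then either T(a,b',c) = 0 for all b' ∈ E_κ, or T(a',b,c) = 0 for all a' ∈ E_κ. -/
import Mathlib


theorem stmt_18 (κ : ℕ) (T : Fin (κ+1) → Fin (κ+1) → Fin (κ+1) → ℝ)
    (hT0 : ∀ a b c, 0 ≤ T a b c) (hT1 : ∀ a b, ∑ c, T a b c = 1)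
    (hpos1 : ∀ a b, 0 < T a b 0) (hpos2 : ∀ c, 0 < T 0 0 c)
    (hcond : ∀ a b c, T a b c =
      T 0 0 0 * T a b 0 * T a 0 c * T 0 b c / (T a 0 0 * T 0 b 0 * T 0 0 c)) :
    ∀ a b c, T a b c = 0 →
      (∀ b' : Fin (κ+1), T a b' c = 0) ∨ (∀ a' : Fin (κ+1), T a' b c = 0) := by
  intro a b c h
  have key : T a 0 c * T 0 b c = 0 := by
    have := (hcond a b c).symm.trans h
    have hd : T a 0 0 * T 0 b 0 * T 0 0 c ≠ 0 :=
      ne_of_gt (mul_pos (mul_pos (hpos1 a 0) (hpos1 0 b)) (hpos2 c))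
    have hnum : T 0 0 0 * T a b 0 * T a 0 c * T 0 b c = 0 :=
      (div_eq_zero_iff.mp this).resolve_right hd
    have h1 : T 0 0 0 ≠ 0 := ne_of_gt (hpos2 0)
    have h2 : T a b 0 ≠ 0 := ne_of_gt (hpos1 a b)
    rcases mul_eq_zero.mp hnum with h' | h'
    · rcases mul_eq_zero.mp h' with h'' | h''
      · exact absurd ((mul_eq_zero.mp h'').resolve_left h1) h2
      · exact mul_eq_zero_of_left h'' _
    · exact mul_eq_zero_of_right _ h'
  rcases mul_eq_zero.mp key with h0 | h0
  · left
    intro b'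
    rw [hcond a b' c, h0]
    ring_nf
  · right
    intro a'
    rw [hcond a' b c, h0]
    ring_nf
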